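/- Fix real numbers z_1,...,z_n, a real z, and β ∈ [0,1] with ⌈(n+1)β⌉ ≤ n. Then z ≤ Q_β(z_1,...,z_n,∞) if and only if z ≤ Q_β(z_1,...,z_n,z), where Q_β of a multiset of size m is its ⌈mβ⌉-th order statistic (with ∞ counting as the largest element). -/

import Mathlib

open MeasureTheory

/-- A finite family of random variables is exchangeable if its joint law is invariant
under every permutation of the indices. -/
def Exchangeable {Ω : Type*} [MeasurableSpace Ω] (ℙ : Measure Ω) {m : ℕ}
    {α : Type*} [MeasurableSpace α] (Z : Fin m → Ω → α) : Prop :=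
  ∀ σ : Equiv.Perm (Fin m),
    Measure.map (fun ω => fun i => Z (σ i) ω) ℙ = Measure.map (fun ω => fun i => Z i ω) ℙ

/-- The `k`-th order statistic (1-indexed) of a finite tuple of extended reals. -/
noncomputable def orderStatE {m : ℕ} (z : Fin m → EReal) (k : ℕ) : EReal :=
  ((List.ofFn z).mergeSort (fun a b => decide (a ≤ b))).getD (k - 1) ⊥

/-- The `k`-th order statistic (1-indexed) of a finite tuple of reals. -/
noncomputable def orderStat {m : ℕ} (z : Fin m → ℝ) (k : ℕ) : ℝ :=
  ((List.ofFn z).mergeSort (fun a b => decide (a ≤ b))).getD (k - 1) 0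

lemma key {α : Type*} [LinearOrder α] (c d : α) :
    ∀ (l : List α), l.Pairwise (· ≤ ·) → ∀ j, j < l.length →
      (l.getD j d < c ↔ j < l.countP (fun a => decide (a < c)))
  | [] => by simp
  | a :: t => by
    intro hs j hj
    rw [List.pairwise_cons] at hs
    by_cases ha : a < c
    · rw [List.countP_cons_of_pos (by simpa using ha)]
      cases j with
      | zero => simp [ha]
      | succ j' =>
        rw [List.getD_cons_succ, key c d t hs.2 j' (by simpa using hj)]
        omega
    · have hc : c ≤ a := not_lt.1 ha
      have ht0 : t.countP (fun a => decide (a < c)) = 0 :=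
        List.countP_eq_zero.2 (fun x hx => by
          simp only [decide_eq_true_eq, not_lt]
          exact hc.trans (hs.1 x hx))
      rw [List.countP_cons_of_neg (by simpa using ha), ht0]
      simp only [Nat.not_lt_zero, iff_false, not_lt]
      cases j with
      | zero => simpa using hc
      | succ j' =>
        rw [List.getD_cons_succ]
        have hj' : j' < t.length := by simpa using hj
        rw [List.getD_eq_getElem _ _ hj']
        exact hc.trans (hs.1 _ (List.getElem_mem hj'))

theorem stmt4 (n : ℕ) (z : Fin n → ℝ) (zv : ℝ) (β : ℝ) (hβ : β ∈ Set.Icc (0 : ℝ) 1)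
    (hk : ⌈((n + 1 : ℕ) : ℝ) * β⌉₊ ≤ n) :
    ((zv : EReal) ≤
        orderStatE (Fin.snoc (fun i : Fin n => ((z i : ℝ) : EReal)) ⊤)
          ⌈((n + 1 : ℕ) : ℝ) * β⌉₊) ↔
      zv ≤ orderStat (Fin.snoc z zv) ⌈((n + 1 : ℕ) : ℝ) * β⌉₊ := by
  set k := ⌈((n + 1 : ℕ) : ℝ) * β⌉₊ with hkdef
  set j := k - 1 with hjdef
  -- the two raw lists
  have hL1 : List.ofFn (Fin.snoc (fun i : Fin n => ((z i : ℝ) : EReal)) ⊤)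
      = (List.ofFn fun i : Fin n => ((z i : ℝ) : EReal)) ++ [⊤] := by
    rw [List.ofFn_succ']
    simp [Fin.snoc, List.concat_eq_append]
  have hL2 : List.ofFn (Fin.snoc z zv) = (List.ofFn z) ++ [zv] := by
    rw [List.ofFn_succ']
    simp [Fin.snoc, List.concat_eq_append]
  -- sortedness
  have htrans : ∀ (a b c : EReal), decide (a ≤ b) → decide (b ≤ c) → decide (a ≤ c) := by
    intro a b c h1 h2
    simp only [decide_eq_true_eq] at *
    exact h1.trans h2
  have htot : ∀ (a b : EReal), decide (a ≤ b) || decide (b ≤ a) := by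
    intro a b
    simpa using le_total a b
  have htransR : ∀ (a b c : ℝ), decide (a ≤ b) → decide (b ≤ c) → decide (a ≤ c) := by
    intro a b c h1 h2
    simp only [decide_eq_true_eq] at *
    exact h1.trans h2
  have htotR : ∀ (a b : ℝ), decide (a ≤ b) || decide (b ≤ a) := by
    intro a b
    simpa using le_total a b
  set L1 := (List.ofFn (Fin.snoc (fun i : Fin n => ((z i : ℝ) : EReal)) ⊤)).mergeSort
      (fun a b => decide (a ≤ b)) with hL1def
  set L2 := (List.ofFn (Fin.snoc z zv)).mergeSort (fun a b => decide (a ≤ b)) with hL2def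
  have hs1 : L1.Pairwise (· ≤ ·) := by
    have := List.pairwise_mergeSort htrans htot
      (List.ofFn (Fin.snoc (fun i : Fin n => ((z i : ℝ) : EReal)) ⊤))
    exact List.Pairwise.imp (by simp) this
  have hs2 : L2.Pairwise (· ≤ ·) := by
    have := List.pairwise_mergeSort htransR htotR (List.ofFn (Fin.snoc z zv))
    exact List.Pairwise.imp (by simp) this
  have hlen1 : L1.length = n + 1 := by
    rw [hL1def, List.length_mergeSort, List.length_ofFn]
  have hlen2 : L2.length = n + 1 := by
    rw [hL2def, List.length_mergeSort, List.length_ofFn]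
  have hjlt : j < n + 1 := by omega
  -- counts
  have hc1 : L1.countP (fun a => decide (a < (zv : EReal)))
      = (List.ofFn z).countP (fun a => decide (a < zv)) := by
    rw [hL1def, (List.mergeSort_perm _ _).countP_eq, hL1, List.countP_append]
    have hmap : (List.ofFn fun i : Fin n => ((z i : ℝ) : EReal))
        = (List.ofFn z).map (fun x : ℝ => (x : EReal)) := by
      rw [List.map_ofFn]; rfl
    rw [hmap, List.countP_map]
    have htop : (decide ((⊤ : EReal) < (zv : EReal))) = false := by simp
    simp only [List.countP_cons, List.countP_nil, htop, if_false, Nat.zero_add, Nat.add_zero]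
    apply List.countP_congr
    intro x _
    simp only [Function.comp_apply, decide_eq_true_eq]
    exact EReal.coe_lt_coe_iff
  have hc2 : L2.countP (fun a => decide (a < zv))
      = (List.ofFn z).countP (fun a => decide (a < zv)) := by
    rw [hL2def, (List.mergeSort_perm _ _).countP_eq, hL2, List.countP_append]
    simp [List.countP_cons]
  -- apply key
  have k1 := key (zv : EReal) (⊥ : EReal) L1 hs1 j (by omega)
  have k2 := key zv (0 : ℝ) L2 hs2 j (by omega)
  rw [hc1] at k1
  rw [hc2] at k2
  unfold orderStatE orderStat
  rw [← hL1def, ← hL2def, ← hjdef]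
  rw [← not_lt, ← not_lt, k1, k2]
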